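/- Let 𝓜 be a linear map from symmetric m×m real matrices to ℝ^n that is (r+r', δ)-RIP with δ ∈ [0,1). Then for every symmetric m×m matrix Z of rank at most r and every symmetric m×m matrix Y of rank at most r', one has |⟨(𝓜*𝓜 − 𝓘)(Z), Y⟩| ≤ δ·‖Z‖_F·‖Y‖_F, where ⟨B,C⟩ = Tr(BᵀC). -/

import Mathlib

open Matrix MeasureTheory ProbabilityTheory BigOperators

noncomputable section

/-- Frobenius norm of a real matrix. -/
def frob {m n : ℕ} (M : Matrix (Fin m) (Fin n) ℝ) : ℝ :=
  Real.sqrt (∑ i, ∑ j, (M i j) ^ 2)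

/-- Euclidean norm of a vector in `ℝⁿ`. -/
def vnorm {n : ℕ} (v : Fin n → ℝ) : ℝ :=
  Real.sqrt (∑ i, (v i) ^ 2)

/-- Spectral norm (operator 2-norm) of a real matrix. -/
def spec {m n : ℕ} (M : Matrix (Fin m) (Fin n) ℝ) : ℝ :=
  ‖LinearMap.toContinuousLinearMap (Matrix.toEuclideanLin M)‖

theorem isHermitian_tmul {m n : ℕ} (M : Matrix (Fin m) (Fin n) ℝ) :
    (Mᵀ * M).IsHermitian := by
  simpa [Matrix.conjTranspose_eq_transpose_of_trivial] using
    Matrix.isHermitian_conjTranspose_mul_self M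

theorem posSemidef_tmul {m n : ℕ} (M : Matrix (Fin m) (Fin n) ℝ) :
    (Mᵀ * M).PosSemidef := by
  simpa [Matrix.conjTranspose_eq_transpose_of_trivial] using
    Matrix.posSemidef_conjTranspose_mul_self M

/-- The `i`-th largest singular value (1-indexed) of a real matrix, i.e. the square root of the
`i`-th largest eigenvalue of `MᵀM`; junk value `0` when `i` is out of range. -/
def svalue {m n : ℕ} (M : Matrix (Fin m) (Fin n) ℝ) (i : ℕ) : ℝ :=
  if h : 1 ≤ i ∧ i ≤ n then
    Real.sqrt ((isHermitian_tmul M).eigenvalues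
      (Tuple.sort (isHermitian_tmul M).eigenvalues ⟨n - i, by omega⟩))
  else 0

/-- Membership in the Stiefel manifold `St(m,r)`. -/
def Stiefel {m r : ℕ} (X : Matrix (Fin m) (Fin r) ℝ) : Prop :=
  Xᵀ * X = 1

/-- The Loewner order on (symmetric) real matrices: `A ⪯ B`. -/
def loewnerLE {m : ℕ} (A B : Matrix (Fin m) (Fin m) ℝ) : Prop :=
  (B - A).PosSemidef

/-- The inverse of the positive semidefinite square root of a matrix (junk value `0` when the
matrix is not positive semidefinite). -/
def psdSqrt {r : ℕ} {S : Matrix (Fin r) (Fin r) ℝ} (hS : S.PosSemidef) :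
    Matrix (Fin r) (Fin r) ℝ :=
  (hS.1.eigenvectorUnitary : Matrix (Fin r) (Fin r) ℝ) *
    diagonal (Real.sqrt ∘ hS.1.eigenvalues) *
      (star hS.1.eigenvectorUnitary : Matrix (Fin r) (Fin r) ℝ)

def sqrtInv {r : ℕ} (S : Matrix (Fin r) (Fin r) ℝ) : Matrix (Fin r) (Fin r) ℝ :=
  haveI := Classical.propDecidable S.PosSemidef
  if h : S.PosSemidef then (psdSqrt h)⁻¹ else 0

/-- The linear sensing map `𝓜` determined by feature matrices `M_i`:
`𝓜(B)_i = Tr(M_iᵀ B)`. -/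
def calM {m n : ℕ} (Ms : Fin n → Matrix (Fin m) (Fin m) ℝ)
    (B : Matrix (Fin m) (Fin m) ℝ) : Fin n → ℝ :=
  fun i => ((Ms i)ᵀ * B).trace

/-- The adjoint `𝓜*` of the sensing map: `𝓜*(y) = ∑ i, y_i M_i`. -/
def calMadj {m n : ℕ} (Ms : Fin n → Matrix (Fin m) (Fin m) ℝ)
    (y : Fin n → ℝ) : Matrix (Fin m) (Fin m) ℝ :=
  ∑ i, y i • Ms i

/-- `(𝓜*𝓜 − 𝓘)(B)`. -/
def calE {m n : ℕ} (Ms : Fin n → Matrix (Fin m) (Fin m) ℝ)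
    (B : Matrix (Fin m) (Fin m) ℝ) : Matrix (Fin m) (Fin m) ℝ :=
  calMadj Ms (calM Ms B) - B

/-- The `(s, δ)`-restricted isometry property for the sensing map determined by `Ms`. -/
def IsRIP {m n : ℕ} (Ms : Fin n → Matrix (Fin m) (Fin m) ℝ) (s : ℕ) (δ : ℝ) : Prop :=
  ∀ B : Matrix (Fin m) (Fin m) ℝ, B.IsSymm → B.rank ≤ s →
    (1 - δ) * frob B ^ 2 ≤ vnorm (calM Ms B) ^ 2 ∧
      vnorm (calM Ms B) ^ 2 ≤ (1 + δ) * frob B ^ 2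

/-- The Riemannian gradient on the Stiefel manifold obtained from the Euclidean gradient `g`
at the point `X`. -/
def Rgrad {m r : ℕ} (X g : Matrix (Fin m) (Fin r) ℝ) : Matrix (Fin m) (Fin r) ℝ :=
  (1 - X * Xᵀ) * g + (2⁻¹ : ℝ) • (X * (Xᵀ * g - gᵀ * X))

/-- One step of Riemannian gradient descent (with `μ = 2`) for the weight-normalized
matrix sensing problem. -/
def RGDstep {m r n : ℕ} (Ms : Fin n → Matrix (Fin m) (Fin m) ℝ)
    (A : Matrix (Fin m) (Fin m) ℝ) (η : ℝ)
    (p : Matrix (Fin m) (Fin r) ℝ × Matrix (Fin r) (Fin r) ℝ) :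
    Matrix (Fin m) (Fin r) ℝ × Matrix (Fin r) (Fin r) ℝ :=
  let X := p.1
  let Θ := p.2
  let Gt := calMadj Ms (calM Ms (X * Θ * Xᵀ - A)) * X * Θ
  let G := Rgrad X Gt
  let X' := (X - η • G) * sqrtInv (1 + η ^ 2 • (Gᵀ * G))
  let Θ' := X'ᵀ * A * X' - X'ᵀ * calE Ms (X' * Θ * X'ᵀ - A) * X'
  (X', Θ')

/-- The standard Gaussian ensemble on `m × r` real matrices (i.i.d. `N(0,1)` entries). -/
def gaussianEnsemble (m r : ℕ) : Measure (Fin m → Fin r → ℝ) :=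
  Measure.pi fun _ : Fin m => Measure.pi fun _ : Fin r => gaussianReal 0 1

end

noncomputable section

section Stmt12Aux

lemma myrank_add_le {m : ℕ} (A B : Matrix (Fin m) (Fin m) ℝ) :
    (A + B).rank ≤ A.rank + B.rank := by
  rw [Matrix.rank, Matrix.rank, Matrix.rank, Matrix.mulVecLin_add]
  refine le_trans (Submodule.finrank_mono ?_) (Submodule.finrank_add_le_finrank_add_finrank _ _)
  rintro x ⟨y, rfl⟩
  exact Submodule.mem_sup.mpr ⟨A.mulVecLin y, ⟨y, rfl⟩, B.mulVecLin y, ⟨y, rfl⟩, rfl⟩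

lemma myrank_smul_le {m : ℕ} (A : Matrix (Fin m) (Fin m) ℝ) (c : ℝ) :
    (c • A).rank ≤ A.rank := by
  rw [Matrix.rank, Matrix.rank]
  refine Submodule.finrank_mono ?_
  rintro x ⟨y, rfl⟩
  rw [Matrix.mulVecLin_apply, Matrix.smul_mulVec]
  exact Submodule.smul_mem _ c ⟨y, rfl⟩

lemma myrank_neg_le {m : ℕ} (A : Matrix (Fin m) (Fin m) ℝ) : (-A).rank ≤ A.rank := by
  have := myrank_smul_le A (-1)
  rwa [neg_one_smul] at this

lemma frob_sq {m : ℕ} (B : Matrix (Fin m) (Fin m) ℝ) :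
    frob B ^ 2 = ∑ i, ∑ j, B i j ^ 2 :=
  Real.sq_sqrt (by positivity)

lemma vnorm_sq {n : ℕ} (v : Fin n → ℝ) : vnorm v ^ 2 = ∑ i, v i ^ 2 :=
  Real.sq_sqrt (by positivity)

lemma frob_zero' {m : ℕ} (B : Matrix (Fin m) (Fin m) ℝ) (h : frob B = 0) : B = 0 := by
  have hs : ∑ i, ∑ j, B i j ^ 2 = 0 := by rw [← frob_sq, h]; norm_num
  ext i j
  have h1 := (Finset.sum_eq_zero_iff_of_nonneg
    (fun i _ => Finset.sum_nonneg fun j _ => sq_nonneg _)).mp hs i (Finset.mem_univ i)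
  have h2 := (Finset.sum_eq_zero_iff_of_nonneg (fun j _ => sq_nonneg _)).mp h1 j
    (Finset.mem_univ j)
  simpa using sq_eq_zero_iff.mp h2

lemma calM_add {m n : ℕ} (Ms : Fin n → Matrix (Fin m) (Fin m) ℝ)
    (B C : Matrix (Fin m) (Fin m) ℝ) (i : Fin n) :
    calM Ms (B + C) i = calM Ms B i + calM Ms C i := by
  simp [calM, Matrix.mul_add]

lemma calM_sub {m n : ℕ} (Ms : Fin n → Matrix (Fin m) (Fin m) ℝ)
    (B C : Matrix (Fin m) (Fin m) ℝ) (i : Fin n) :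
    calM Ms (B - C) i = calM Ms B i - calM Ms C i := by
  simp [calM, Matrix.mul_sub]

lemma calM_smul {m n : ℕ} (Ms : Fin n → Matrix (Fin m) (Fin m) ℝ)
    (c : ℝ) (B : Matrix (Fin m) (Fin m) ℝ) (i : Fin n) :
    calM Ms (c • B) i = c * calM Ms B i := by
  simp [calM, Matrix.mul_smul]

lemma trace_tmul {m : ℕ} (B C : Matrix (Fin m) (Fin m) ℝ) :
    (Bᵀ * C).trace = ∑ i, ∑ j, B i j * C i j := by
  simp only [Matrix.trace, Matrix.diag, Matrix.mul_apply, Matrix.transpose_apply]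
  exact Finset.sum_comm

lemma traceE {m n : ℕ} (Ms : Fin n → Matrix (Fin m) (Fin m) ℝ)
    (Z Y : Matrix (Fin m) (Fin m) ℝ) :
    ((calE Ms Z)ᵀ * Y).trace
      = (∑ i, calM Ms Z i * calM Ms Y i) - (Zᵀ * Y).trace := by
  simp [calE, calMadj, Matrix.transpose_sub, Matrix.sub_mul, Matrix.trace_sub,
    Matrix.transpose_sum, Matrix.sum_mul, Matrix.trace_sum, Matrix.transpose_smul,
    Matrix.smul_mul, Matrix.trace_smul, calM, smul_eq_mul]

lemma pol2 {m : ℕ} (Z Y : Matrix (Fin m) (Fin m) ℝ) :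
    (∑ i, ∑ j, (Z i j + Y i j) ^ 2) - (∑ i, ∑ j, (Z i j - Y i j) ^ 2)
      = 4 * ∑ i, ∑ j, Z i j * Y i j := by
  rw [← Finset.sum_sub_distrib, Finset.mul_sum]
  refine Finset.sum_congr rfl fun i _ => ?_
  rw [← Finset.sum_sub_distrib, Finset.mul_sum]
  exact Finset.sum_congr rfl fun j _ => by ring

lemma par2 {m : ℕ} (Z Y : Matrix (Fin m) (Fin m) ℝ) :
    (∑ i, ∑ j, (Z i j + Y i j) ^ 2) + (∑ i, ∑ j, (Z i j - Y i j) ^ 2)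
      = 2 * ((∑ i, ∑ j, Z i j ^ 2) + ∑ i, ∑ j, Y i j ^ 2) := by
  rw [← Finset.sum_add_distrib]
  rw [show (2:ℝ) * ((∑ i, ∑ j, Z i j ^ 2) + ∑ i, ∑ j, Y i j ^ 2)
      = ∑ i, (2 * ∑ j, Z i j ^ 2 + 2 * ∑ j, Y i j ^ 2) by
    rw [Finset.sum_add_distrib, ← Finset.mul_sum, ← Finset.mul_sum]; ring]
  refine Finset.sum_congr rfl fun i _ => ?_
  rw [Finset.mul_sum, Finset.mul_sum, ← Finset.sum_add_distrib, ← Finset.sum_add_distrib]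
  exact Finset.sum_congr rfl fun j _ => by ring

lemma pol1 {n : ℕ} (u w : Fin n → ℝ) :
    (∑ i, (u i + w i) ^ 2) - (∑ i, (u i - w i) ^ 2) = 4 * ∑ i, u i * w i := by
  rw [← Finset.sum_sub_distrib, Finset.mul_sum]
  exact Finset.sum_congr rfl fun i _ => by ring

lemma stmt12_key {m n r r' : ℕ} (Ms : Fin n → Matrix (Fin m) (Fin m) ℝ)
    (δ : ℝ) (hRIP : IsRIP Ms (r + r') δ)
    (Z Y : Matrix (Fin m) (Fin m) ℝ) (hZsym : Z.IsSymm) (hZr : Z.rank ≤ r)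
    (hYsym : Y.IsSymm) (hYr : Y.rank ≤ r') :
    |(∑ i, calM Ms Z i * calM Ms Y i) - ∑ i, ∑ j, Z i j * Y i j|
      ≤ δ / 2 * ((∑ i, ∑ j, Z i j ^ 2) + ∑ i, ∑ j, Y i j ^ 2) := by
  have hsadd : (Z + Y).IsSymm := hZsym.add hYsym
  have hssub : (Z - Y).IsSymm := hZsym.sub hYsym
  have hradd : (Z + Y).rank ≤ r + r' := le_trans (myrank_add_le Z Y) (add_le_add hZr hYr)
  have hrsub : (Z - Y).rank ≤ r + r' := by
    rw [sub_eq_add_neg]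
    exact le_trans (myrank_add_le Z (-Y)) (add_le_add hZr (le_trans (myrank_neg_le Y) hYr))
  have h1 := hRIP (Z + Y) hsadd hradd
  have h2 := hRIP (Z - Y) hssub hrsub
  rw [vnorm_sq, frob_sq] at h1 h2
  have e1 : (∑ i, calM Ms (Z + Y) i ^ 2) = ∑ i, (calM Ms Z i + calM Ms Y i) ^ 2 :=
    Finset.sum_congr rfl fun i _ => by rw [calM_add]
  have e2 : (∑ i, calM Ms (Z - Y) i ^ 2) = ∑ i, (calM Ms Z i - calM Ms Y i) ^ 2 :=
    Finset.sum_congr rfl fun i _ => by rw [calM_sub]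
  have e3 : (∑ i, ∑ j, (Z + Y) i j ^ 2) = ∑ i, ∑ j, (Z i j + Y i j) ^ 2 := by
    simp [Matrix.add_apply]
  have e4 : (∑ i, ∑ j, (Z - Y) i j ^ 2) = ∑ i, ∑ j, (Z i j - Y i j) ^ 2 := by
    simp [Matrix.sub_apply]
  rw [e1, e3] at h1
  rw [e2, e4] at h2
  obtain ⟨h1a, h1b⟩ := h1
  obtain ⟨h2a, h2b⟩ := h2
  have p1 := pol1 (calM Ms Z) (calM Ms Y)
  have p2 := pol2 Z Y
  have p3 := par2 Z Y
  have hδp3 : δ * ((∑ i, ∑ j, (Z i j + Y i j) ^ 2) + ∑ i, ∑ j, (Z i j - Y i j) ^ 2)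
      = δ * (2 * ((∑ i, ∑ j, Z i j ^ 2) + ∑ i, ∑ j, Y i j ^ 2)) := by rw [p3]
  refine abs_le.mpr ⟨?_, ?_⟩ <;> nlinarith [h1a, h1b, h2a, h2b, p1, p2, p3, hδp3]

end Stmt12Aux
theorem stmt12 {m n r r' : ℕ}
    (Ms : Fin n → Matrix (Fin m) (Fin m) ℝ) (hMs : ∀ i, (Ms i).IsSymm)
    (δ : ℝ) (hδ0 : 0 ≤ δ) (hδ1 : δ < 1) (hRIP : IsRIP Ms (r + r') δ)
    (Z Y : Matrix (Fin m) (Fin m) ℝ) (hZsym : Z.IsSymm) (hZr : Z.rank ≤ r)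
    (hYsym : Y.IsSymm) (hYr : Y.rank ≤ r') :
    |((calE Ms Z)ᵀ * Y).trace| ≤ δ * frob Z * frob Y := by
  rw [traceE, trace_tmul]
  rcases eq_or_ne (frob Z) 0 with hZ0 | hZ0
  · have hz : Z = 0 := frob_zero' Z hZ0
    subst hz
    simp [calM, hZ0]
  rcases eq_or_ne (frob Y) 0 with hY0 | hY0
  · have hy : Y = 0 := frob_zero' Y hY0
    subst hy
    simp [calM, hY0]
  have hZpos : 0 < frob Z := lt_of_le_of_ne (Real.sqrt_nonneg _) (Ne.symm hZ0)
  have hYpos : 0 < frob Y := lt_of_le_of_ne (Real.sqrt_nonneg _) (Ne.symm hY0)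
  set t : ℝ := Real.sqrt (frob Y / frob Z) with ht
  have htpos : 0 < t := Real.sqrt_pos.mpr (by positivity)
  have ht2 : t ^ 2 = frob Y / frob Z := Real.sq_sqrt (by positivity)
  have hZs : (t • Z).IsSymm := by rw [Matrix.IsSymm, Matrix.transpose_smul, hZsym]
  have hYs : (t⁻¹ • Y).IsSymm := by rw [Matrix.IsSymm, Matrix.transpose_smul, hYsym]
  have hkey := stmt12_key Ms δ hRIP (t • Z) (t⁻¹ • Y) hZs
    (le_trans (myrank_smul_le Z t) hZr) hYs (le_trans (myrank_smul_le Y t⁻¹) hYr)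
  have eL : (∑ i, calM Ms (t • Z) i * calM Ms (t⁻¹ • Y) i)
      = ∑ i, calM Ms Z i * calM Ms Y i :=
    Finset.sum_congr rfl fun i _ => by
      rw [calM_smul, calM_smul, mul_mul_mul_comm, mul_inv_cancel₀ htpos.ne', one_mul]
  have eM : (∑ i, ∑ j, (t • Z) i j * (t⁻¹ • Y) i j) = ∑ i, ∑ j, Z i j * Y i j :=
    Finset.sum_congr rfl fun i _ => Finset.sum_congr rfl fun j _ => by
      simp only [Matrix.smul_apply, smul_eq_mul]
      rw [mul_mul_mul_comm, mul_inv_cancel₀ htpos.ne', one_mul]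
  have eZ : (∑ i, ∑ j, (t • Z) i j ^ 2) = t ^ 2 * ∑ i, ∑ j, Z i j ^ 2 := by
    rw [Finset.mul_sum]
    refine Finset.sum_congr rfl fun i _ => ?_
    rw [Finset.mul_sum]
    exact Finset.sum_congr rfl fun j _ => by simp [Matrix.smul_apply, mul_pow]
  have eY : (∑ i, ∑ j, (t⁻¹ • Y) i j ^ 2) = (t⁻¹) ^ 2 * ∑ i, ∑ j, Y i j ^ 2 := by
    rw [Finset.mul_sum]
    refine Finset.sum_congr rfl fun i _ => ?_
    rw [Finset.mul_sum]
    exact Finset.sum_congr rfl fun j _ => by simp [Matrix.smul_apply, mul_pow]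
  rw [eL, eM, eZ, eY, ← frob_sq, ← frob_sq] at hkey
  have hR : δ / 2 * (t ^ 2 * frob Z ^ 2 + (t⁻¹) ^ 2 * frob Y ^ 2)
      = δ * frob Z * frob Y := by
    rw [inv_pow, ht2]
    field_simp
    ring
  linarith [hkey]

end
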